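/- For each r, s ∈ ZMod d, the linear map T_{r,s} : ℂ^d → ℂ^d ⊗ ℂ^d ⊗ ℂ^d defined by T_{r,s}(ψ) = (1/√d) · (U_{r,s}ᴴ ψ) ⊗ |U_{r,s}⟩⟩ is an isometry (T_{r,s}ᴴ ∘ T_{r,s} = id), and it intertwines the representations: (U_{p,q} ⊗ U_{p,q} ⊗ conj(U_{p,q})) ∘ T_{r,s} = T_{r,s} ∘ U_{p,q} for all p, q ∈ ZMod d. Moreover, for (r,s) ≠ (r',s'), the ranges of T_{r,s} and T_{r',s'} are orthogonal. -/

import Mathlib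

open Matrix Kronecker BigOperators

/-- ω = exp(2πi/d). -/
noncomputable def omega (d : ℕ) : ℂ := Complex.exp (2 * Real.pi * Complex.I / d)

/-- The Weyl–Heisenberg matrix `U_{p,q}`. -/
noncomputable def WH (d : ℕ) [NeZero d] (p q : ZMod d) : Matrix (ZMod d) (ZMod d) ℂ :=
  fun j k => if j = k + p then omega d ^ (q.val * k.val) else 0

/-- The isometry `T_{r,s} : ℂ^d → ℂ^d ⊗ ℂ^d ⊗ ℂ^d`, `ψ ↦ (1/√d)·(U_{r,s}ᴴ ψ) ⊗ |U_{r,s}⟩⟩`,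
written as a `d³ × d` matrix: `(T_{r,s})_{(i,j,k),m} = (1/√d)·(U_{r,s}ᴴ)_{i,m}·(U_{r,s})_{j,k}`. -/
noncomputable def Tiso (d : ℕ) [NeZero d] (r s : ZMod d) :
    Matrix (ZMod d × ZMod d × ZMod d) (ZMod d) ℂ :=
  fun x m => (Real.sqrt d : ℂ)⁻¹ * (WH d r s)ᴴ x.1 m * WH d r s x.2.1 x.2.2

set_option linter.unusedSectionVars false
set_option linter.unusedVariables false

namespace TisoAux
variable (d : ℕ) [NeZero d]

noncomputable def eps (t : ZMod d) : ℂ := omega d ^ t.val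

lemma hprim : IsPrimitiveRoot (omega d) d := Complex.isPrimitiveRoot_exp d (NeZero.ne d)

lemma omega_pow_d : omega d ^ d = 1 := (hprim d).pow_eq_one

lemma omega_pow_mod (n : ℕ) : omega d ^ n = omega d ^ (n % d) := by
  conv_lhs => rw [← Nat.div_add_mod n d]
  rw [pow_add, pow_mul, omega_pow_d, one_pow, one_mul]

lemma eps_natmul (a b : ZMod d) : omega d ^ (a.val * b.val) = eps d (a * b) := by
  rw [eps, ZMod.val_mul, ← omega_pow_mod]

lemma eps_add (a b : ZMod d) : eps d (a + b) = eps d a * eps d b := by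
  rw [eps, eps, eps, ZMod.val_add, ← omega_pow_mod, pow_add]

lemma eps_zero : eps d 0 = 1 := by rw [eps, ZMod.val_zero, pow_zero]

lemma eps_mul_eps_neg (a : ZMod d) : eps d a * eps d (-a) = 1 := by
  rw [← eps_add, add_neg_cancel, eps_zero]

lemma conj_omega : (starRingEnd ℂ) (omega d) = (omega d)⁻¹ := by
  rw [omega, ← Complex.exp_conj, ← Complex.exp_neg]
  congr 1
  simp [map_div₀, Complex.conj_I, map_ofNat]
  ring

lemma conj_eps (a : ZMod d) : (starRingEnd ℂ) (eps d a) = eps d (-a) := by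
  have h1 := eps_mul_eps_neg d a
  rw [eps, map_pow, conj_omega, inv_pow]
  exact (eq_inv_of_mul_eq_one_right h1).symm

lemma eps_eq_one_iff (t : ZMod d) : eps d t = 1 ↔ t = 0 := by
  constructor
  · intro h
    have hd := ((hprim d).pow_eq_one_iff_dvd t.val).mp h
    exact (ZMod.val_eq_zero t).mp (Nat.eq_zero_of_dvd_of_lt hd (ZMod.val_lt t))
  · rintro rfl; exact eps_zero d

lemma eps_ne_zero (a : ZMod d) : eps d a ≠ 0 := by
  intro h
  have h1 := eps_mul_eps_neg d a
  rw [h, zero_mul] at h1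
  exact one_ne_zero h1.symm

lemma sum_eps (t : ZMod d) : ∑ k : ZMod d, eps d (t * k) = if t = 0 then (d : ℂ) else 0 := by
  split
  · next h =>
    subst h
    simp [eps_zero, ZMod.card]
  · next h =>
    have h1 : eps d t ≠ 1 := by rwa [ne_eq, eps_eq_one_iff]
    have h2 : ∀ k : ZMod d, eps d (t * k) = eps d t ^ k.val := by
      intro k
      rw [eps, eps, ZMod.val_mul, ← omega_pow_mod, pow_mul]
    calc ∑ k : ZMod d, eps d (t * k) = ∑ k : ZMod d, eps d t ^ k.val := by
            exact Finset.sum_congr rfl fun k _ => h2 k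
      _ = ∑ n ∈ Finset.range d, eps d t ^ n := by
            refine Finset.sum_nbij' (fun k : ZMod d => k.val) (fun n : ℕ => (n : ZMod d))
              ?_ ?_ ?_ ?_ ?_ <;> simp
            · intro k; exact ZMod.val_lt k
            · intro n hn; exact Nat.mod_eq_of_lt hn
      _ = 0 := by
            have := geom_sum_eq h1 d
            rw [this]
            have : eps d t ^ d = 1 := by
              rw [eps, ← pow_mul, mul_comm, pow_mul, omega_pow_d, one_pow]
            rw [this]
            simp

lemma WH_apply (p q j k : ZMod d) : WH d p q j k = if k = j - p then eps d (q * k) else 0 := by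
  by_cases hc : k = j - p
  · have h2 : j = k + p := by rw [hc]; exact (sub_add_cancel j p).symm
    simp only [WH, if_pos h2, if_pos hc]
    exact eps_natmul d q k
  · have h2 : ¬ j = k + p := fun h => hc (by rw [h]; exact (add_sub_cancel_right k p).symm)
    simp only [WH, if_neg h2, if_neg hc]


lemma Tiso_apply (r s : ZMod d) (x : ZMod d × ZMod d × ZMod d) (m : ZMod d) :
    Tiso d r s x m = (Real.sqrt d : ℂ)⁻¹ *
      (if m = x.1 + r then eps d (-(s * x.1)) else 0) *
      (if x.2.1 = x.2.2 + r then eps d (s * x.2.2) else 0) := by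
  rw [Tiso, conjTranspose_apply]
  simp only [WH, eps_natmul, Complex.star_def, apply_ite (starRingEnd ℂ), map_zero, conj_eps]

lemma Tiso_apply_sub (r s : ZMod d) (x : ZMod d × ZMod d × ZMod d) (m : ZMod d) :
    Tiso d r s x m = (Real.sqrt d : ℂ)⁻¹ *
      (if x.1 = m - r then eps d (-(s * x.1)) else 0) *
      (if x.2.2 = x.2.1 - r then eps d (s * x.2.2) else 0) := by
  rw [Tiso, conjTranspose_apply]
  simp only [WH_apply, Complex.star_def, apply_ite (starRingEnd ℂ), map_zero, conj_eps]

lemma sum_shift (t a : ZMod d) :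
    (∑ x : ZMod d, eps d (t * (x - a))) = ∑ x : ZMod d, eps d (t * x) :=
  Fintype.sum_equiv (Equiv.subRight a) _ _ (fun x => rfl)

lemma csq : (Real.sqrt d : ℂ)⁻¹ * (Real.sqrt d : ℂ)⁻¹ * d = 1 := by
  have hd : (0:ℝ) ≤ d := Nat.cast_nonneg d
  have h1 : (Real.sqrt d : ℂ) * (Real.sqrt d : ℂ) = (d : ℂ) := by
    rw [← Complex.ofReal_mul, Real.mul_self_sqrt hd, Complex.ofReal_natCast]
  have h2 : (d : ℂ) ≠ 0 := Nat.cast_ne_zero.mpr (NeZero.ne d)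
  field_simp
  rw [sq, h1]
  exact div_self h2

lemma key (r s r' s' : ZMod d) :
    (Tiso d r s)ᴴ * Tiso d r' s' =
      if (r, s) = (r', s') then (1 : Matrix (ZMod d) (ZMod d) ℂ) else 0 := by
  ext m m'
  rw [Matrix.mul_apply]
  simp only [conjTranspose_apply, Tiso_apply_sub, Complex.star_def, _root_.map_mul, map_inv₀,
    Complex.conj_ofReal, apply_ite (starRingEnd ℂ), map_zero, conj_eps, neg_neg,
    Fintype.sum_prod_type, ite_mul, mul_ite, mul_zero, zero_mul,
    Finset.sum_ite_irrel, Finset.sum_const_zero, Finset.sum_ite_eq', Finset.mem_univ, if_true]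
  by_cases hr : r' = r
  case neg =>
    have hne : ((r, s) : ZMod d × ZMod d) ≠ (r', s') := by
      intro h; exact hr (congrArg Prod.fst h).symm
    simp [sub_right_inj, hr, hne]
  case pos =>
    subst hr
    simp only [eq_self_iff_true, if_true]
    by_cases hm : m' = m
    case neg =>
      have h1 : ¬ (m' - r' = m - r') := fun h => hm (sub_left_inj.mp h)
      rw [Finset.sum_congr rfl (fun x _ => if_neg h1), Finset.sum_const_zero]
      split <;> simp [Matrix.one_apply, Ne.symm hm]
    case pos =>
      subst hm
      simp only [eq_self_iff_true, if_true]
      have step : ∀ x : ZMod d,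
          (Real.sqrt d : ℂ)⁻¹ * eps d (s * (m' - r')) * eps d (-(s * (x - r'))) *
            ((Real.sqrt d : ℂ)⁻¹ * eps d (-(s' * (m' - r'))) * eps d (s' * (x - r'))) =
          (Real.sqrt d : ℂ)⁻¹ * (Real.sqrt d : ℂ)⁻¹ *
            (eps d (s * (m' - r')) * eps d (-(s' * (m' - r')))) * eps d ((s' - s) * (x - r')) := by
        intro x
        have h2 : eps d (-(s * (x - r'))) * eps d (s' * (x - r')) = eps d ((s' - s) * (x - r')) := by
          rw [← eps_add]; congr 1; ring
        rw [← h2]; ring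
      rw [Finset.sum_congr rfl (fun x _ => step x), ← Finset.mul_sum, sum_shift, sum_eps]
      by_cases hs : s' = s
      · rw [hs, eps_mul_eps_neg]
        have h0 : s - s = 0 := sub_self s
        rw [if_pos h0, mul_one]
        have : ((r', s) : ZMod d × ZMod d) = (r', s) := rfl
        simp only [eq_self_iff_true, if_true]
        rw [Matrix.one_apply_eq]
        linear_combination csq d
      · have h0 : ¬ (s' - s = 0) := fun h => hs (sub_eq_zero.mp h)
        rw [if_neg h0, mul_zero]
        have hne : ((r', s) : ZMod d × ZMod d) ≠ (r', s') := by
          intro h; exact hs (congrArg Prod.snd h).symm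
        simp [hne]

lemma WH_row (p q j k : ZMod d) : WH d p q j k = if j = k + p then eps d (q * k) else 0 := by
  simp only [WH, eps_natmul]

lemma intertwine (r s p q : ZMod d) :
    (WH d p q ⊗ₖ (WH d p q ⊗ₖ (WH d p q).map (starRingEnd ℂ))) * Tiso d r s =
      Tiso d r s * WH d p q := by
  ext x m
  rw [Matrix.mul_apply, Matrix.mul_apply]
  conv_lhs => simp only [Matrix.kroneckerMap_apply, Matrix.map_apply, WH_apply, Tiso_apply_sub,
    Complex.star_def, apply_ite (starRingEnd ℂ),
    map_zero, conj_eps, Fintype.sum_prod_type, ite_mul, mul_ite, mul_zero, zero_mul,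
    Finset.sum_ite_irrel, Finset.sum_const_zero, Finset.sum_ite_eq', Finset.mem_univ, if_true]
  conv_rhs => simp only [Tiso_apply, WH_row, ite_mul, mul_ite, mul_zero, zero_mul,
    Finset.sum_ite_irrel, Finset.sum_const_zero, Finset.sum_ite_eq', Finset.mem_univ, if_true]
  rw [Finset.sum_eq_single (x.2.1 - p)]
  rotate_left
  · intro b _ hb
    simp [hb]
  · intro h; exact absurd (Finset.mem_univ _) h
  simp only [eq_self_iff_true, if_true]
  have hc1 : (x.2.1 - p - r = x.2.2 - p) ↔ (x.2.1 = x.2.2 + r) := by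
    rw [sub_right_comm, sub_left_inj, sub_eq_iff_eq_add]
  have hc2 : (m - r = x.1 - p) ↔ (m + p = x.1 + r) := by
    rw [sub_eq_sub_iff_add_eq_add]
  simp only [hc1, hc2]
  by_cases h1 : x.2.1 = x.2.2 + r
  case neg => simp [h1]
  case pos =>
  by_cases h2 : m + p = x.1 + r
  case neg => simp [h1, h2]
  case pos =>
  simp only [if_pos h1, if_pos h2]
  have e1 : x.1 = m + p - r := eq_sub_of_add_eq h2.symm
  have e2 : x.2.2 = x.2.1 - r := eq_sub_of_add_eq h1.symm
  rw [e1, e2]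
  have key2 : eps d (q*(m-r)) * (eps d (q*(x.2.1-p)) * eps d (-(q*(x.2.1-p-r)))) *
      (eps d (-(s*(m-r))) * eps d (s*(x.2.1-p-r))) =
      eps d (-(s*(m+p-r))) * eps d (s*(x.2.1-r)) * eps d (q*m) := by
    simp only [← eps_add]
    congr 1
    ring
  linear_combination ((Real.sqrt d : ℂ)⁻¹) * key2

end TisoAux

theorem Tiso_isometry_intertwines_orthogonal (d : ℕ) [NeZero d] :
    (∀ r s : ZMod d, (Tiso d r s)ᴴ * Tiso d r s = 1) ∧
    (∀ r s p q : ZMod d,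
      (WH d p q ⊗ₖ (WH d p q ⊗ₖ (WH d p q).map (starRingEnd ℂ))) * Tiso d r s =
        Tiso d r s * WH d p q) ∧
    (∀ r s r' s' : ZMod d, (r, s) ≠ (r', s') → (Tiso d r s)ᴴ * Tiso d r' s' = 0) := by
  refine ⟨?_, ?_, ?_⟩
  · intro r s
    have h := TisoAux.key d r s r s
    simpa using h
  · intro r s p q
    exact TisoAux.intertwine d r s p q
  · intro r s r' s' h
    have hk := TisoAux.key d r s r' s'
    rwa [if_neg h] at hk
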